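/- For every integer n ≥ 3, C_{n+2}/(n+2) − C_n/n = (−1)^{n+1} · 2^{n−2} / ((n−3)! · n · (n−1) · (n+2)). -/

import Mathlib

/-- `Lseg n = Σ_{k=1}^{n} (−1)^{k+1} (2^{k−1}/k!) (n−k+1)`, the expected number of
transmissions in one slot from a fully occupied segment of `n` nodes (so `Lseg 0 = 0`). -/
noncomputable def Lseg (n : ℕ) : ℝ :=
  ∑ k ∈ Finset.Icc 1 n,
    (-1 : ℝ) ^ (k + 1) * (2 ^ (k - 1) / (Nat.factorial k : ℝ)) * ((n : ℝ) - (k : ℝ) + 1)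

/-- `C_k = 1 + L_{k−3}`, the expected number of transmissions in one slot from a fully
occupied circle of `k ≥ 3` nodes. -/
noncomputable def Ccirc (k : ℕ) : ℝ := 1 + Lseg (k - 3)

/-- Partial sums of the exponential series for `e^{-2}`. -/
noncomputable def Fexp (n : ℕ) : ℝ :=
  ∑ k ∈ Finset.range n, (-2 : ℝ) ^ k / (Nat.factorial k : ℝ)

lemma Fexp_succ (n : ℕ) :
    Fexp (n + 1) = Fexp n + (-2 : ℝ) ^ n / (Nat.factorial n : ℝ) := by
  simp [Fexp, Finset.sum_range_succ]

lemma neg_two_pow (j : ℕ) : ((-2 : ℝ)) ^ j = (-1 : ℝ) ^ j * 2 ^ j := by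
  rw [neg_pow]

lemma sumA (n : ℕ) :
    ∑ k ∈ Finset.Icc 1 n, (-1 : ℝ) ^ (k + 1) * (2 ^ (k - 1) / (Nat.factorial k : ℝ)) =
      (1 - Fexp (n + 1)) / 2 := by
  induction n with
  | zero => simp [Fexp, Nat.factorial]
  | succ n ih =>
    rw [Finset.sum_Icc_succ_top (by omega : 1 ≤ n + 1), ih, Fexp_succ (n+1)]
    have hf : ((Nat.factorial (n+1) : ℝ)) ≠ 0 := by positivity
    simp only [Nat.add_sub_cancel, neg_two_pow, pow_succ]
    field_simp
    ring

lemma lseg_closed (n : ℕ) :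
    Lseg n = ((n : ℝ) + 1) * (1 - Fexp (n + 1)) / 2 - Fexp n := by
  induction n with
  | zero => simp [Lseg, Fexp, Nat.factorial]
  | succ n ih =>
    have split : ∑ k ∈ Finset.Icc 1 n,
        (-1 : ℝ) ^ (k + 1) * (2 ^ (k - 1) / (Nat.factorial k : ℝ)) * (((n:ℝ) + 1) - (k:ℝ) + 1)
        = ∑ k ∈ Finset.Icc 1 n,
            (-1 : ℝ) ^ (k + 1) * (2 ^ (k - 1) / (Nat.factorial k : ℝ)) * ((n:ℝ) - (k:ℝ) + 1)
          + ∑ k ∈ Finset.Icc 1 n,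
            (-1 : ℝ) ^ (k + 1) * (2 ^ (k - 1) / (Nat.factorial k : ℝ)) := by
      rw [← Finset.sum_add_distrib]
      exact Finset.sum_congr rfl fun k _ => by ring
    have step : Lseg (n + 1) =
        Lseg n + ∑ k ∈ Finset.Icc 1 (n+1),
          (-1 : ℝ) ^ (k + 1) * (2 ^ (k - 1) / (Nat.factorial k : ℝ)) := by
      unfold Lseg
      rw [Finset.sum_Icc_succ_top (by omega : 1 ≤ n + 1),
          Finset.sum_Icc_succ_top (by omega : 1 ≤ n + 1)]
      push_cast
      rw [split]
      ring
    rw [step, ih, sumA (n+1), Fexp_succ (n+1), Fexp_succ n]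
    have hf : ((Nat.factorial n : ℝ)) ≠ 0 := by positivity
    have hn1 : ((n : ℝ) + 1) ≠ 0 := by positivity
    simp only [pow_succ, Nat.factorial_succ]
    push_cast
    field_simp
    ring

/-- For every `n ≥ 3`,
`C_{n+2}/(n+2) − C_n/n = (−1)^{n+1} 2^{n−2} / ((n−3)! n (n−1) (n+2))`. -/
theorem Ccirc_div_diff (n : ℕ) (hn : 3 ≤ n) :
    Ccirc (n + 2) / ((n : ℝ) + 2) - Ccirc n / (n : ℝ) =
      (-1 : ℝ) ^ (n + 1) * 2 ^ (n - 2) /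
        ((Nat.factorial (n - 3) : ℝ) * n * ((n : ℝ) - 1) * ((n : ℝ) + 2)) := by
  obtain ⟨m, rfl⟩ : ∃ m, n = m + 3 := ⟨n - 3, by omega⟩
  have e1 : (m + 3) - 3 = m := by omega
  have e2 : (m + 3 + 2) - 3 = m + 2 := by omega
  have e3 : (m + 3) - 2 = m + 1 := by omega
  rw [Ccirc, Ccirc, e1, e2, e3, lseg_closed m, lseg_closed (m+2)]
  simp only [show m + 2 + 1 = m + 1 + 1 + 1 from rfl, Fexp_succ, pow_succ,
    Nat.factorial_succ, neg_two_pow, show m + 3 + 1 = m + 4 from rfl]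
  have hm0 : (Nat.factorial m : ℝ) ≠ 0 := by positivity
  have hm1 : (m : ℝ) + 1 ≠ 0 := by positivity
  have hm2 : (m : ℝ) + 2 ≠ 0 := by positivity
  have hm3 : (m : ℝ) + 3 ≠ 0 := by positivity
  have hm5 : (m : ℝ) + 5 ≠ 0 := by positivity
  push_cast
  field_simp
  rw [eq_div_iff (by ring_nf; positivity)]
  ring
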